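/- Let G be a finite simple graph. Then deg h_G = α(G) if and only if I(G,−1) ≠ 0. Moreover, if I(G,−1) = 0 and k = min{ i : I^{(i)}(G,−1) ≠ 0 } (this minimum exists since I^{(α(G))}(G,−1) = α(G)!·s_{α(G)}(G) ≠ 0), then deg h_G = α(G) − k. -/
import Mathlib


open Finset Polynomial

/-- Every subset of a finite type gets a `Fintype` instance (classically). -/
noncomputable instance fintypeOfSet {V : Type*} [Finite V] (s : Set V) : Fintype ↥s :=
  Fintype.ofFinite _

/-- `s` is an independent set of the graph `G`: no two of its vertices are adjacent. -/
def IsIndepSet {V : Type*} (G : SimpleGraph V) (s : Finset V) : Prop :=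
  ∀ u ∈ s, ∀ v ∈ s, ¬ G.Adj u v

/-- The finset of all independent sets of `G`. -/
noncomputable def indepFinsets {V : Type*} [Fintype V] (G : SimpleGraph V) :
    Finset (Finset V) :=
  @Finset.filter _ (fun s => IsIndepSet G s) (Classical.decPred _) Finset.univ

/-- `sCount G i` is the number of independent sets of size `i` in `G`. -/
noncomputable def sCount {V : Type*} [Fintype V] (G : SimpleGraph V) (i : ℕ) : ℕ :=
  ((indepFinsets G).filter (fun s => s.card = i)).card

/-- The independence number `α(G)`: the maximum size of an independent set. -/
noncomputable def indepNum {V : Type*} [Fintype V] (G : SimpleGraph V) : ℕ :=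
  (indepFinsets G).sup Finset.card

/-- The independence polynomial `I(G,t) = Σ_i s_i(G) t^i ∈ ℤ[t]`. -/
noncomputable def indepPoly {V : Type*} [Fintype V] (G : SimpleGraph V) : Polynomial ℤ :=
  ∑ i ∈ Finset.range (indepNum G + 1), Polynomial.C (sCount G i : ℤ) * Polynomial.X ^ i

/-- The h-polynomial of the edge ideal of `G`:
`h_G(t) = Σ_i s_i(G) t^i (1-t)^{α(G)-i} ∈ ℤ[t]`. -/
noncomputable def hPoly {V : Type*} [Fintype V] (G : SimpleGraph V) : Polynomial ℤ :=
  ∑ i ∈ Finset.range (indepNum G + 1),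
    Polynomial.C (sCount G i : ℤ) * Polynomial.X ^ i *
      (1 - Polynomial.X) ^ (indepNum G - i)

/-- The degree of a vertex in a finite simple graph. -/
noncomputable def deg {V : Type*} [Fintype V] (G : SimpleGraph V) (v : V) : ℕ :=
  (@Finset.filter _ (fun u => G.Adj v u) (Classical.decPred _) Finset.univ).card

/-! ### Auxiliary transform -/

/-- The transform `T n p = Σ_{i ≤ n} p_i X^i (1-X)^{n-i}`. -/
noncomputable def Taux (n : ℕ) (p : Polynomial ℤ) : Polynomial ℤ :=
  ∑ i ∈ Finset.range (n+1), C (p.coeff i) * X ^ i * (1 - X) ^ (n - i)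

lemma natDegree_one_sub_X_le : (1 - X : Polynomial ℤ).natDegree ≤ 1 :=
  le_trans (natDegree_sub_le _ _) (by simp)

lemma coeff_one_sub_X_pow (m : ℕ) : ((1 - X : Polynomial ℤ) ^ m).coeff m = (-1) ^ m := by
  have h1 : (1 - X : Polynomial ℤ) = -(X - C 1) := by rw [neg_sub, map_one]
  have hm : ((X - C 1 : Polynomial ℤ) ^ m).Monic := (monic_X_sub_C 1).pow m
  have hd : ((X - C 1 : Polynomial ℤ) ^ m).natDegree = m := by
    rw [(monic_X_sub_C 1).natDegree_pow, natDegree_X_sub_C, mul_one]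
  have hc := hm.coeff_natDegree
  rw [hd] at hc
  have h2 : ((-1 : Polynomial ℤ)) ^ m = C ((-1 : ℤ) ^ m) := by
    rw [map_pow, map_neg, map_one]
  rw [h1, neg_pow, h2, coeff_C_mul, hc, mul_one]

lemma Taux_natDegree_le (n : ℕ) (p : Polynomial ℤ) : (Taux n p).natDegree ≤ n := by
  refine natDegree_sum_le_of_forall_le _ _ fun i hi => ?_
  rw [Finset.mem_range] at hi
  calc (C (p.coeff i) * X ^ i * (1 - X) ^ (n - i)).natDegree
      ≤ (C (p.coeff i) * X ^ i).natDegree + ((1 - X : Polynomial ℤ) ^ (n - i)).natDegree :=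
        natDegree_mul_le
    _ ≤ (0 + i) + (n - i) * 1 := by
        gcongr
        · exact le_trans natDegree_mul_le (by simp)
        · exact le_trans natDegree_pow_le (by gcongr; exact natDegree_one_sub_X_le)
    _ ≤ n := by omega

lemma Taux_add (n : ℕ) (p q : Polynomial ℤ) : Taux n (p + q) = Taux n p + Taux n q := by
  rw [Taux, Taux, Taux, ← Finset.sum_add_distrib]
  refine Finset.sum_congr rfl fun i _ => ?_
  rw [coeff_add, map_add, add_mul, add_mul]

lemma coeff_term (a : ℤ) (i N : ℕ) :
    (C a * X ^ i * (1 - X : Polynomial ℤ) ^ (N - i)).coeff N = a * (if i ≤ N then (-1) ^ (N - i) else 0) := by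
  by_cases h : i ≤ N
  · rw [if_pos h, mul_assoc, coeff_C_mul]
    congr 1
    obtain ⟨m, rfl⟩ : ∃ m, N = m + i := ⟨N - i, by omega⟩
    rw [Nat.add_sub_cancel, coeff_X_pow_mul, coeff_one_sub_X_pow]
  · rw [if_neg h, mul_zero, (by omega : N - i = 0), pow_zero, mul_one, coeff_C_mul,
      coeff_X_pow, if_neg (by omega : ¬ N = i), mul_zero]

lemma Taux_coeff_top {n : ℕ} {p : Polynomial ℤ} (hp : p.natDegree ≤ n) :
    (Taux n p).coeff n = (-1) ^ n * p.eval (-1) := by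
  rw [Taux, finset_sum_coeff,
    eval_eq_sum_range' (Nat.lt_succ_of_le hp), Finset.mul_sum]
  refine Finset.sum_congr rfl fun i hi => ?_
  rw [Finset.mem_range] at hi
  rw [coeff_term, if_pos (by omega : i ≤ n)]
  have key : ((-1:ℤ))^(n-i) * (-1)^i = (-1)^n := by
    rw [← pow_add]; congr 1; omega
  have hone : ((-1:ℤ))^i * (-1)^i = 1 := by rw [← mul_pow]; norm_num
  have h1 : ((-1:ℤ))^(n-i) = (-1)^n * (-1)^i :=
    calc (-1:ℤ)^(n-i) = (-1)^(n-i) * ((-1)^i * (-1)^i) := by rw [hone, mul_one]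
      _ = ((-1)^(n-i) * (-1)^i) * (-1)^i := by ring
      _ = (-1)^n * (-1)^i := by rw [key]
  rw [h1]; ring

lemma Taux_step {n : ℕ} {p : Polynomial ℤ} (hp : p.natDegree ≤ n) :
    Taux (n+1) ((X + 1) * p) = Taux n p := by
  have hXp : (X + 1 : Polynomial ℤ) * p = X * p + p := by ring
  rw [hXp, Taux_add]
  have h1 : Taux (n+1) (X * p) = ∑ i ∈ Finset.range (n+1),
      C (p.coeff i) * X^(i+1) * (1 - X)^(n - i) := by
    rw [Taux, Finset.sum_range_succ']
    have h0 : (X * p : Polynomial ℤ).coeff 0 = 0 := by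
      rw [mul_coeff_zero, coeff_X_zero, zero_mul]
    rw [h0]
    simp only [coeff_X_mul, Nat.succ_sub_succ, map_zero, zero_mul, add_zero]
  have h2 : Taux (n+1) p = ∑ i ∈ Finset.range (n+1),
      C (p.coeff i) * X^i * (1 - X)^(n+1 - i) := by
    rw [Taux, Finset.sum_range_succ,
      coeff_eq_zero_of_natDegree_lt (by omega : p.natDegree < n + 1)]
    simp
  rw [h1, h2, ← Finset.sum_add_distrib, Taux]
  refine Finset.sum_congr rfl fun i hi => ?_
  rw [Finset.mem_range] at hi
  rw [(by omega : n + 1 - i = (n - i) + 1)]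
  ring

lemma Taux_pow (k : ℕ) : ∀ {n : ℕ} {p : Polynomial ℤ}, p.natDegree ≤ n →
    Taux (n + k) ((X + 1)^k * p) = Taux n p := by
  induction k with
  | zero => intro n p _; simp
  | succ k ih =>
    intro n p hp
    have h1 : (X + 1 : Polynomial ℤ)^(k+1) * p = (X+1)^k * ((X+1)*p) := by ring
    have hX1 : (X + 1 : Polynomial ℤ).natDegree ≤ 1 :=
      le_trans (natDegree_add_le _ _) (by simp)
    have h2 : ((X + 1 : Polynomial ℤ) * p).natDegree ≤ n + 1 :=
      le_trans natDegree_mul_le (by omega)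
    rw [h1, (by omega : n + (k+1) = (n+1) + k), ih h2, Taux_step hp]

section Graph
variable {V : Type*} [Fintype V] (G : SimpleGraph V)

lemma coeff_indepPoly (i : ℕ) (hi : i ≤ indepNum G) :
    (indepPoly G).coeff i = (sCount G i : ℤ) := by
  rw [indepPoly, finset_sum_coeff]
  rw [Finset.sum_eq_single i (fun b _ hb => by
      rw [coeff_C_mul, coeff_X_pow, if_neg (fun h => hb h.symm), mul_zero])
    (fun h => absurd (Finset.mem_range.mpr (by omega)) h)]
  rw [coeff_C_mul, coeff_X_pow, if_pos rfl, mul_one]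

lemma natDegree_indepPoly_le : (indepPoly G).natDegree ≤ indepNum G := by
  refine natDegree_sum_le_of_forall_le _ _ fun i hi => ?_
  rw [Finset.mem_range] at hi
  exact le_trans natDegree_mul_le (by simp; omega)

lemma sCount_top_pos : 0 < sCount G (indepNum G) := by
  have hne : (indepFinsets G).Nonempty := by
    refine ⟨∅, ?_⟩
    rw [indepFinsets, @Finset.mem_filter _ _ (Classical.decPred _)]
    exact ⟨Finset.mem_univ _, fun u hu => absurd hu (Finset.notMem_empty u)⟩
  obtain ⟨s, hs, hcard⟩ := Finset.exists_mem_eq_sup _ hne Finset.card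
  exact Finset.card_pos.mpr ⟨s, Finset.mem_filter.mpr ⟨hs, hcard.symm⟩⟩

lemma hPoly_eq : hPoly G = Taux (indepNum G) (indepPoly G) := by
  rw [hPoly, Taux]
  refine Finset.sum_congr rfl fun i hi => ?_
  rw [Finset.mem_range] at hi
  rw [coeff_indepPoly G i (by omega)]
end Graph

theorem degree_hPoly_eq_indepNum_iff {V : Type*} [Fintype V] (G : SimpleGraph V) :
    ((hPoly G).natDegree = indepNum G ↔ (indepPoly G).eval (-1) ≠ 0) ∧
    (Polynomial.derivative^[indepNum G] (indepPoly G)).eval (-1) ≠ 0 ∧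
    (∀ k : ℕ, (indepPoly G).eval (-1) = 0 →
      (∀ i < k, (Polynomial.derivative^[i] (indepPoly G)).eval (-1) = 0) →
      (Polynomial.derivative^[k] (indepPoly G)).eval (-1) ≠ 0 →
      (hPoly G).natDegree = indepNum G - k) := by
  set α := indepNum G with hα
  set q := indepPoly G with hq
  have hcoeff : q.coeff α = (sCount G α : ℤ) := coeff_indepPoly G α le_rfl
  have hsα : (sCount G α : ℤ) ≠ 0 := Int.natCast_ne_zero.mpr (sCount_top_pos G).ne' 
  have hq0 : q ≠ 0 := fun h => hsα (by rw [← hcoeff, h, coeff_zero])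
  have hdegq : q.natDegree = α :=
    le_antisymm (natDegree_indepPoly_le G) (le_natDegree_of_ne_zero (hcoeff ▸ hsα))
  set k0 := rootMultiplicity (-1) q with hk0
  obtain ⟨r, hfac, hnd⟩ := q.exists_eq_pow_rootMultiplicity_mul_and_not_dvd hq0 (-1)
  rw [← hk0] at hfac
  have hX1 : (X - C (-1) : Polynomial ℤ) = X + 1 := by rw [map_neg, map_one, sub_neg_eq_add]
  have hr0 : r ≠ 0 := by rintro rfl; rw [mul_zero] at hfac; exact hq0 hfac
  have hmon : ((X - C (-1) : Polynomial ℤ) ^ k0).Monic := (monic_X_sub_C _).pow _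
  have hrdeg : k0 + r.natDegree = α := by
    have h1 : q.natDegree = ((X - C (-1) : Polynomial ℤ) ^ k0).natDegree + r.natDegree := by
      rw [hfac, natDegree_mul (hmon.ne_zero) hr0]
    rw [(monic_X_sub_C (-1)).natDegree_pow, natDegree_X_sub_C, mul_one] at h1
    omega
  have hk0α : k0 ≤ α := by omega
  have hreval : r.eval (-1) ≠ 0 := fun h => hnd (dvd_iff_isRoot.mpr h)
  have hkey : hPoly G = Taux (α - k0) r := by
    have h2 : Taux ((α - k0) + k0) ((X + 1)^k0 * r) = Taux (α - k0) r := Taux_pow k0 (by omega)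
    rw [hPoly_eq, ← hα]
    calc Taux α (indepPoly G) = Taux ((α - k0) + k0) ((X + 1)^k0 * r) := by
          rw [← hX1, ← hfac, ← hq]; congr 1; omega
      _ = Taux (α - k0) r := h2
  have hdeg_h : (hPoly G).natDegree = α - k0 := by
    rw [hkey]
    refine le_antisymm (Taux_natDegree_le _ _) (le_natDegree_of_ne_zero ?_)
    rw [Taux_coeff_top (by omega)]
    exact mul_ne_zero (pow_ne_zero _ (by norm_num)) hreval
  refine ⟨?_, ?_, ?_⟩
  · constructor
    · intro h heval
      have h1 : 0 < k0 := (rootMultiplicity_pos hq0).mpr heval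
      omega
    · intro h
      have h1 : ¬(0 < k0) := fun hpos => h ((rootMultiplicity_pos hq0).mp hpos)
      omega
  · have h1 : (Polynomial.derivative^[α] q).natDegree ≤ 0 := by
      have := natDegree_iterate_derivative q α
      omega
    have h2 : (Polynomial.derivative^[α] q).coeff 0 = (0+α).descFactorial α • q.coeff (0+α) :=
      coeff_iterate_derivative q 0
    rw [zero_add] at h2
    rw [eq_C_of_natDegree_le_zero h1, eval_C, h2, hcoeff,
      Nat.descFactorial_self, nsmul_eq_mul]
    exact mul_ne_zero (Int.natCast_ne_zero.mpr (Nat.factorial_ne_zero α)) hsα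
  · intro k hev hlt hne
    have hk0lek : k0 ≤ k := by
      by_contra h
      push_neg at h
      exact hne (isRoot_iterate_derivative_of_lt_rootMultiplicity h)
    have hkne0 : k ≠ 0 := by
      rintro rfl
      exact hne (by simpa using hev)
    have hklek0 : k ≤ k0 := by
      have h := lt_rootMultiplicity_of_isRoot_iterate_derivative_of_mem_nonZeroDivisors'
        (t := (-1 : ℤ)) (n := k - 1) hq0
        (fun m hm => hlt m (by omega))
        (fun m _ hm0 => mem_nonZeroDivisors_of_ne_zero (Int.natCast_ne_zero.mpr hm0))
      omega
    rw [hdeg_h]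
    omega
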